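/- With the lattice Gale transform setup, for a subset I ⊆ {1,...,r}, the vectors {n_i : i ∈ I} can be extended to a ℤ-basis of N if and only if for every i ∈ I the element a_i lies in the subgroup of P generated by {a_j : j ∉ I}. -/

import Mathlib

/-- In the lattice Gale transform setup, `{n i : i ∈ I}` can be completed
to a `ℤ`-basis of `N` iff every `a i`, `i ∈ I`, lies in the subgroup generated by the
`a j` with `j ∉ I`. -/
theorem stmt5 {N P : Type*} [AddCommGroup N] [Module ℤ N] [Module.Free ℤ N]
    [Module.Finite ℤ N] [AddCommGroup P] {r : ℕ} (n : Fin r → N)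
    (hspan : ∀ e : N →ₗ[ℤ] ℤ, (∀ i, e (n i) = 0) → e = 0)
    (β : (Fin r → ℤ) →+ P) (hsurj : Function.Surjective β)
    (hker : ∀ v : Fin r → ℤ, β v = 0 ↔ ∃ e : N →ₗ[ℤ] ℤ, ∀ i, v i = e (n i))
    (I : Set (Fin r)) :
    (∃ (ι : Type) (b : Module.Basis ι ℤ N) (f : I → ι),
        Function.Injective f ∧ ∀ i : I, b (f i) = n i) ↔
      ∀ i ∈ I, β (Pi.single i 1) ∈
        AddSubgroup.closure {p | ∃ j, j ∉ I ∧ β (Pi.single j 1) = p} := by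
  classical
  set T : Set P := {p | ∃ j, j ∉ I ∧ β (Pi.single j 1) = p} with hT
  -- Lemma A: if w vanishes on I, then β w ∈ closure T
  have lemA : ∀ w : Fin r → ℤ, (∀ j ∈ I, w j = 0) → β w ∈ AddSubgroup.closure T := by
    intro w hw
    have hw' : w = ∑ j : Fin r, Pi.single j (w j) := (Finset.univ_sum_single w).symm
    rw [hw', map_sum]
    refine AddSubgroup.sum_mem _ fun j _ => ?_
    by_cases hj : j ∈ I
    · have h0 : (Pi.single j (w j) : Fin r → ℤ) = 0 := by rw [hw j hj]; simp
      rw [h0, map_zero]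
      exact (AddSubgroup.closure T).zero_mem
    · have heq : (Pi.single j (w j) : Fin r → ℤ) = w j • (Pi.single j 1 : Fin r → ℤ) := by
        ext k
        by_cases hk : k = j <;> simp [hk, Pi.single_apply]
      rw [heq, map_zsmul]
      exact AddSubgroup.zsmul_mem _
        (AddSubgroup.subset_closure (show β (Pi.single j 1) ∈ T from ⟨j, hj, rfl⟩)) _
  -- Lemma B: anything in closure T is β w for some w vanishing on I
  have lemB : ∀ p ∈ AddSubgroup.closure T,
      ∃ w : Fin r → ℤ, (∀ j ∈ I, w j = 0) ∧ β w = p := by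
    intro p hp
    induction hp using AddSubgroup.closure_induction with
    | mem x hx =>
      obtain ⟨j, hj, rfl⟩ := hx
      exact ⟨Pi.single j 1, fun k hk => by
        have : k ≠ j := fun h => hj (h ▸ hk)
        simp [Pi.single_apply, this], rfl⟩
    | zero => exact ⟨0, fun _ _ => rfl, map_zero β⟩
    | add x y _ _ hx hy =>
      obtain ⟨w1, h1, rfl⟩ := hx
      obtain ⟨w2, h2, rfl⟩ := hy
      exact ⟨w1 + w2, fun j hj => by simp [h1 j hj, h2 j hj], map_add β _ _⟩
    | neg x _ hx =>
      obtain ⟨w, h1, rfl⟩ := hx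
      exact ⟨-w, fun j hj => by simp [h1 j hj], map_neg β _⟩
  constructor
  · rintro ⟨ι, b, f, hf, hbf⟩ i hi
    set e := b.coord (f ⟨i, hi⟩) with he
    have hβ : β (fun j => e (n j)) = 0 := (hker _).mpr ⟨e, fun _ => rfl⟩
    have key : β (Pi.single i 1) = β (Pi.single i 1 - fun j => e (n j)) := by
      rw [map_sub, hβ, sub_zero]
    rw [key]
    refine lemA _ fun j hj => ?_
    have h1 : e (n j) = if j = i then 1 else 0 := by
      rw [← hbf ⟨j, hj⟩, he, Module.Basis.coord_apply, Module.Basis.repr_self, Finsupp.single_apply]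
      by_cases h : j = i
      · subst h; simp
      · have : f ⟨j, hj⟩ ≠ f ⟨i, hi⟩ := fun hc => h (Subtype.ext_iff.mp (hf hc))
        simp [this, h]
    simp [Pi.single_apply, h1]
  · intro h
    -- construct dual functionals
    have hφ : ∀ i : I, ∃ e : N →ₗ[ℤ] ℤ, ∀ j ∈ I, e (n j) = if j = (i : Fin r) then 1 else 0 := by
      rintro ⟨i, hi⟩
      obtain ⟨w, hw, hβw⟩ := lemB _ (h i hi)
      have h0 : β (Pi.single i 1 - w) = 0 := by rw [map_sub, hβw, sub_self]
      obtain ⟨e, he⟩ := (hker _).mp h0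
      refine ⟨e, fun j hj => ?_⟩
      have hj' := he j
      simp only [Pi.sub_apply] at hj'
      rw [← hj', hw j hj, sub_zero, Pi.single_apply]
    choose φ hφ using hφ
    haveI : Fintype I := Fintype.ofFinite _
    haveI : @SMulCommClass ℤ ℤ N (Module.toDistribMulAction (R := ℤ) (M := N)).toSMul
      (Module.toDistribMulAction (R := ℤ) (M := N)).toSMul :=
      @smulCommClass_self ℤ N _ (Module.toDistribMulAction (R := ℤ) (M := N)).toMulAction
    set s : (↥I → ℤ) →ₗ[ℤ] N :=
      (LinearMap.lsum ℤ (fun _ : I => ℤ) ℤ) (fun i => LinearMap.toSpanSingleton ℤ N (n i)) with hs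
    set q : N →ₗ[ℤ] (↥I → ℤ) := LinearMap.pi (fun i : I => φ i) with hq
    have hqs : ∀ c : ↥I → ℤ, q (s c) = c := by
      intro c
      funext i'
      simp only [hq, hs, LinearMap.pi_apply, LinearMap.lsum_apply, LinearMap.sum_apply,
        LinearMap.comp_apply, LinearMap.proj_apply, LinearMap.toSpanSingleton_apply,
        map_sum, LinearMap.map_smul, smul_eq_mul]
      have h2 : ∀ i : I, c i * φ i' (n i) = if i = i' then c i else 0 := by
        intro i
        rw [hφ i' i i.2]
        by_cases hii : i = i'
        · simp [hii]
        · have hne : (i : Fin r) ≠ (i' : Fin r) := fun hc => hii (Subtype.ext hc)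
          simp [hne, hii]
      rw [Finset.sum_congr rfl (fun i _ => h2 i), Finset.sum_ite_eq' Finset.univ i' c]
      simp
    have hsingle : ∀ i : I, s (Pi.single i 1) = n i := by
      intro i
      simp only [hs, LinearMap.lsum_apply, LinearMap.sum_apply, LinearMap.comp_apply,
        LinearMap.proj_apply, LinearMap.toSpanSingleton_apply]
      rw [Finset.sum_eq_single i]
      · simp
        exact @one_smul ℤ N _ (Module.toDistribMulAction (R := ℤ) (M := N)).toMulAction (n i)
      · intro j _ hji
        have : Pi.single (M := fun _ : I => ℤ) i 1 j = 0 := by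
          have : j ≠ i := hji
          simp [Pi.single_apply, this]
        rw [this]
        exact @zero_smul ℤ N _ _
          (@MulActionWithZero.toSMulWithZero ℤ N _ _ Module.toMulActionWithZero) (n ↑j)
      · intro hi; exact absurd (Finset.mem_univ i) hi
    have hsinj : Function.Injective s := by
      intro c1 c2 hc
      have := congrArg q hc
      rwa [hqs, hqs] at this
    have hcompl : IsCompl (LinearMap.range s) (LinearMap.ker q) := by
      constructor
      · rw [disjoint_iff]
        ext x
        simp only [Submodule.mem_inf, Submodule.mem_bot, LinearMap.mem_range,
          LinearMap.mem_ker]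
        constructor
        · rintro ⟨⟨c, rfl⟩, hx2⟩
          rw [hqs] at hx2
          rw [hx2, map_zero]
        · rintro rfl
          exact ⟨⟨0, map_zero s⟩, map_zero q⟩
      · rw [codisjoint_iff]
        ext x
        simp only [Submodule.mem_top, iff_true]
        have hx : x = s (q x) + (x - s (q x)) := by abel
        rw [hx]
        refine Submodule.add_mem_sup ⟨q x, rfl⟩ ?_
        rw [LinearMap.mem_ker, map_sub, hqs, sub_self]
    letI : Module ℤ ↥(LinearMap.range s) := (LinearMap.range s).module
    letI : Module ℤ ↥(LinearMap.ker q) := (LinearMap.ker q).module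
    letI : Module ℤ (↥(LinearMap.range s) × ↥(LinearMap.ker q)) := Prod.instModule
    obtain ⟨m, bK⟩ := Submodule.basisOfPid (Module.Free.chooseBasis ℤ N) (LinearMap.ker q)
    refine ⟨↥I ⊕ Fin m,
      ((((Pi.basisFun ℤ I).map (LinearEquiv.ofInjective s hsinj)).prod bK).map
        (Submodule.prodEquivOfIsCompl _ _ hcompl)),
      Sum.inl, Sum.inl_injective, fun i => ?_⟩
    rw [Module.Basis.map_apply, Submodule.coe_prodEquivOfIsCompl',
      Module.Basis.prod_apply_inl_fst, Module.Basis.prod_apply_inl_snd]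
    rw [Module.Basis.map_apply, LinearEquiv.ofInjective_apply, Pi.basisFun_apply]
    simp only [ZeroMemClass.coe_zero, add_zero]
    exact hsingle i
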